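/- arXiv:1510.00904 — 3 statements merged into one kernel-verified Lean document; each statement's English description precedes it below -/
import Mathlib

section
/- For all real numbers a, b, c, d, e one has (c²+d²+e²+a²+b²+ab)² ≥ (a−b)²c² + (2b+a)²d² + (2a+b)²e², with equality if and only if c(a+b) = 0, c² + ab = 0, da = 0, d² = b² + ab, eb = 0, and e² = a² + ab. -/
private lemma stmt13_aux (a b c d e : ℝ) (hP : c*(a+b) = 0) (hQ : d*a = 0)
    (hR : e*b = 0) (hT : c^2 + d^2 + e^2 - a^2 - b^2 - a*b = 0) :
    c^2 + a*b = 0 ∧ d^2 = b^2 + a*b ∧ e^2 = a^2 + a*b := by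
  rcases mul_eq_zero.mp hQ with hd | ha
  · rcases mul_eq_zero.mp hR with he | hb
    · rcases mul_eq_zero.mp hP with hc | hab
      · subst hd he hc
        have h1 : a^2 = 0 := by nlinarith [sq_nonneg (a+b), sq_nonneg b]
        have h2 : b^2 = 0 := by nlinarith [sq_nonneg (a+b), sq_nonneg a]
        have ha : a = 0 := pow_eq_zero_iff two_ne_zero |>.mp h1
        have hb : b = 0 := pow_eq_zero_iff two_ne_zero |>.mp h2
        subst ha hb
        norm_num
      · have hb : b = -a := by linarith
        subst hd he hb
        refine ⟨by nlinarith [hT], by ring, by ring⟩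
    · subst hd hb
      rcases mul_eq_zero.mp hP with hc | hab
      · subst hc
        refine ⟨by ring, by ring, by nlinarith [hT]⟩
      · have ha : a = 0 := by linarith
        subst ha
        refine ⟨by nlinarith [hT, sq_nonneg c, sq_nonneg e], by ring,
          by nlinarith [hT, sq_nonneg c, sq_nonneg e]⟩
  · subst ha
    rcases mul_eq_zero.mp hR with he | hb
    · rcases mul_eq_zero.mp hP with hc | hab
      · subst he hc
        refine ⟨by ring, by nlinarith [hT], by ring⟩
      · have hb : b = 0 := by linarith
        subst hb he
        refine ⟨by nlinarith [hT, sq_nonneg c, sq_nonneg d],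
          by nlinarith [hT, sq_nonneg c, sq_nonneg d], by ring⟩
    · subst hb
      refine ⟨by nlinarith [hT, sq_nonneg c, sq_nonneg d, sq_nonneg e],
        by nlinarith [hT, sq_nonneg c, sq_nonneg d, sq_nonneg e],
        by nlinarith [hT, sq_nonneg c, sq_nonneg d, sq_nonneg e]⟩

set_option maxHeartbeats 1000000 in
theorem stmt13 (a b c d e : ℝ) :
    (a - b)^2 * c^2 + (2*b + a)^2 * d^2 + (2*a + b)^2 * e^2 ≤
      (c^2 + d^2 + e^2 + a^2 + b^2 + a*b)^2 ∧
    ((c^2 + d^2 + e^2 + a^2 + b^2 + a*b)^2 =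
        (a - b)^2 * c^2 + (2*b + a)^2 * d^2 + (2*a + b)^2 * e^2 ↔
      (c * (a + b) = 0 ∧ c^2 + a*b = 0 ∧ d * a = 0 ∧ d^2 = b^2 + a*b ∧
        e * b = 0 ∧ e^2 = a^2 + a*b)) := by
  have key : (c^2 + d^2 + e^2 + a^2 + b^2 + a*b)^2 -
      ((a - b)^2 * c^2 + (2*b + a)^2 * d^2 + (2*a + b)^2 * e^2) =
      (c^2 + d^2 + e^2 - a^2 - b^2 - a*b)^2 + 3*(c*(a+b))^2 + 3*(d*a)^2 + 3*(e*b)^2 := by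
    ring
  have s1 := sq_nonneg (c^2 + d^2 + e^2 - a^2 - b^2 - a*b)
  have s2 := sq_nonneg (c*(a+b))
  have s3 := sq_nonneg (d*a)
  have s4 := sq_nonneg (e*b)
  constructor
  · linarith
  constructor
  · intro h
    have hP : c*(a+b) = 0 := by
      have : (c*(a+b))^2 = 0 := by linarith
      exact pow_eq_zero_iff two_ne_zero |>.mp this
    have hQ : d*a = 0 := by
      have : (d*a)^2 = 0 := by linarith
      exact pow_eq_zero_iff two_ne_zero |>.mp this
    have hR : e*b = 0 := by
      have : (e*b)^2 = 0 := by linarith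
      exact pow_eq_zero_iff two_ne_zero |>.mp this
    have hT : c^2 + d^2 + e^2 - a^2 - b^2 - a*b = 0 := by
      have : (c^2 + d^2 + e^2 - a^2 - b^2 - a*b)^2 = 0 := by linarith
      exact pow_eq_zero_iff two_ne_zero |>.mp this
    obtain ⟨hX, hY, hZ⟩ := stmt13_aux a b c d e hP hQ hR hT
    exact ⟨hP, hX, hQ, hY, hR, hZ⟩
  · rintro ⟨hP, hX, hQ, hY, hR, hZ⟩
    nlinarith [hP, hQ, hR]
end

section
/- Let A, C be real numbers with A > C ≥ 0 and let B ∈ ℝ³ with |B| < A − C. Define f : ℝ³ → ℝ by f(a) = A√(1+|a|²) + ⟨B, a⟩ + C/√(1+|a|²). Then f is strictly convex, f(a) → ∞ as |a| → ∞, and f attains its global minimum at a unique point of ℝ³. -/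
open Filter
open scoped RealInnerProductSpace

noncomputable section

abbrev E3 := EuclideanSpace ℝ (Fin 3)

namespace Stmt15Aux

abbrev P := WithLp 2 (ℝ × E3)

def X (a : E3) : P := (WithLp.equiv 2 (ℝ × E3)).symm (1, a)

lemma norm_X (a : E3) : ‖X a‖ = Real.sqrt (1 + ‖a‖ ^ 2) := by
  rw [X, WithLp.prod_norm_eq_of_L2]
  norm_num

lemma one_le_sqrt (a : E3) : 1 ≤ Real.sqrt (1 + ‖a‖ ^ 2) := by
  exact Real.le_sqrt_of_sq_le (by nlinarith [sq_nonneg ‖a‖])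

lemma sqrt_pos (a : E3) : 0 < Real.sqrt (1 + ‖a‖ ^ 2) :=
  lt_of_lt_of_le one_pos (one_le_sqrt a)

lemma norm_le_sqrt (a : E3) : ‖a‖ ≤ Real.sqrt (1 + ‖a‖ ^ 2) := by
  exact Real.le_sqrt_of_sq_le (by linarith)

lemma sqrt_strict {x y : E3} (hxy : x ≠ y) {t u : ℝ} (ht : 0 < t) (hu : 0 < u)
    (htu : t + u = 1) :
    Real.sqrt (1 + ‖t • x + u • y‖ ^ 2) <
      t * Real.sqrt (1 + ‖x‖ ^ 2) + u * Real.sqrt (1 + ‖y‖ ^ 2) := by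
  have hXcomb : X (t • x + u • y) = t • X x + u • X y := by
    rw [X, X, X, WithLp.equiv_symm_apply, ← WithLp.toLp_smul, ← WithLp.toLp_smul,
      ← WithLp.toLp_add]
    congr 1
    simp [Prod.ext_iff, htu]
  have hne1 : t • X x ≠ 0 := by
    intro h
    have := congrArg norm h
    rw [norm_smul, norm_X, norm_zero] at this
    have : t * Real.sqrt (1 + ‖x‖ ^ 2) = 0 := by
      rwa [Real.norm_eq_abs, abs_of_pos ht] at this
    nlinarith [sqrt_pos x]
  have hne2 : u • X y ≠ 0 := by
    intro h
    have := congrArg norm h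
    rw [norm_smul, norm_X, norm_zero] at this
    have : u * Real.sqrt (1 + ‖y‖ ^ 2) = 0 := by
      rwa [Real.norm_eq_abs, abs_of_pos hu] at this
    nlinarith [sqrt_pos y]
  have hray : ¬ SameRay ℝ (t • X x) (u • X y) := by
    intro h
    obtain ⟨r, hr, hreq⟩ := h.exists_pos_left hne1 hne2
    have hreq' : r • t • ((1 : ℝ), x) = u • ((1 : ℝ), y) := by
      have := congrArg (WithLp.equiv 2 (ℝ × E3)) hreq
      simpa [X, WithLp.ofLp_smul] using this
    rw [Prod.ext_iff] at hreq'
    obtain ⟨h1, h2⟩ := hreq'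
    simp only [Prod.smul_fst, Prod.smul_snd, smul_eq_mul, mul_one] at h1 h2
    rw [smul_smul, h1] at h2
    exact hxy (smul_right_injective E3 (ne_of_gt hu) h2)
  have hlt : ‖t • X x + u • X y‖ < ‖t • X x‖ + ‖u • X y‖ :=
    norm_add_lt_of_not_sameRay hray
  calc Real.sqrt (1 + ‖t • x + u • y‖ ^ 2) = ‖X (t • x + u • y)‖ := (norm_X _).symm
    _ = ‖t • X x + u • X y‖ := by rw [hXcomb]
    _ < ‖t • X x‖ + ‖u • X y‖ := hlt
    _ = t * Real.sqrt (1 + ‖x‖ ^ 2) + u * Real.sqrt (1 + ‖y‖ ^ 2) := by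
        rw [norm_smul, norm_smul, norm_X, norm_X, Real.norm_eq_abs,
          Real.norm_eq_abs, abs_of_pos ht, abs_of_pos hu]

lemma F_mono {A C σ τ : ℝ} (hAC : C < A) (hC : 0 ≤ C) (hσ : 1 ≤ σ) (hστ : σ < τ) :
    A * σ + C / σ < A * τ + C / τ := by
  have hσ0 : 0 < σ := lt_of_lt_of_le one_pos hσ
  have hτ0 : 0 < τ := lt_trans hσ0 hστ
  have hkey : C / σ - C / τ = C * (τ - σ) / (σ * τ) := by
    field_simp
  have h1 : 1 ≤ σ * τ := le_of_lt (by nlinarith)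
  have h2 : C * (τ - σ) / (σ * τ) ≤ C * (τ - σ) :=
    div_le_self (by nlinarith) h1
  have h3 : C * (τ - σ) < A * (τ - σ) := by nlinarith
  linarith [hkey, h2, h3]

lemma F_convex {A C α β t u : ℝ} (hAC : C < A) (hC : 0 ≤ C) (hα : 1 ≤ α) (hβ : 1 ≤ β)
    (ht : 0 < t) (hu : 0 < u) (htu : t + u = 1) :
    A * (t * α + u * β) + C / (t * α + u * β) ≤
      t * (A * α + C / α) + u * (A * β + C / β) := by
  have hα0 : 0 < α := lt_of_lt_of_le one_pos hα
  have hβ0 : 0 < β := lt_of_lt_of_le one_pos hβ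
  have h2 : 0 < t * α + u * β := by positivity
  have h1 : 0 < α * β := by positivity
  have keyid : (t * α + u * β) * (t * β + u * α) - α * β = t * u * (α - β) ^ 2 := by
    linear_combination (α * β * (t + u + 1)) * htu
  have key : α * β ≤ (t * α + u * β) * (t * β + u * α) := by
    nlinarith [keyid, mul_nonneg (mul_nonneg ht.le hu.le) (sq_nonneg (α - β))]
  have step1 : C / (t * α + u * β) ≤ C * (t * β + u * α) / (α * β) := by
    rw [div_le_div_iff₀ h2 h1]
    nlinarith [mul_le_mul_of_nonneg_left key hC]
  have step2 : C * (t * β + u * α) / (α * β) = t * (C / α) + u * (C / β) := by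
    field_simp
  nlinarith [step1, step2]

end Stmt15Aux

open Stmt15Aux in
theorem stmt15 (A C : ℝ) (hAC : C < A) (hC : 0 ≤ C) (B : E3) (hB : ‖B‖ < A - C)
    (f : E3 → ℝ)
    (hf : f = fun a => A * Real.sqrt (1 + ‖a‖^2) + ⟪B, a⟫ +
      C / Real.sqrt (1 + ‖a‖^2)) :
    StrictConvexOn ℝ Set.univ f ∧
    Tendsto f (cocompact E3) atTop ∧
    (∃! a₀ : E3, ∀ a : E3, f a₀ ≤ f a) := by
  subst hf
  set s : E3 → ℝ := fun a => Real.sqrt (1 + ‖a‖ ^ 2) with hs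
  -- strict convexity
  have hstrict : StrictConvexOn ℝ Set.univ
      (fun a => A * s a + ⟪B, a⟫ + C / s a) := by
    refine ⟨convex_univ, fun x _ y hy hxy t u ht hu htu => ?_⟩
    have hsstrict := sqrt_strict hxy ht hu htu
    have hmono : A * s (t • x + u • y) + C / s (t • x + u • y) <
        A * (t * s x + u * s y) + C / (t * s x + u * s y) :=
      F_mono hAC hC (one_le_sqrt _) hsstrict
    have hconv : A * (t * s x + u * s y) + C / (t * s x + u * s y) ≤
        t * (A * s x + C / s x) + u * (A * s y + C / s y) :=
      F_convex hAC hC (one_le_sqrt x) (one_le_sqrt y) ht hu htu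
    have hinner : ⟪B, t • x + u • y⟫ = t * ⟪B, x⟫ + u * ⟪B, y⟫ := by
      rw [inner_add_right, real_inner_smul_right, real_inner_smul_right]
    simp only [smul_eq_mul]
    rw [hinner]
    linarith
  refine ⟨hstrict, ?_, ?_⟩
  · -- coercivity
    have hbound : ∀ a : E3, (A - ‖B‖) * ‖a‖ ≤
        A * s a + ⟪B, a⟫ + C / s a := by
      intro a
      have h1 : A * ‖a‖ ≤ A * s a :=
        mul_le_mul_of_nonneg_left (norm_le_sqrt a) (by linarith [norm_nonneg B])
      have h2 : -(‖B‖ * ‖a‖) ≤ ⟪B, a⟫ := by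
        have := abs_real_inner_le_norm B a
        have := neg_abs_le (⟪B, a⟫)
        linarith [abs_real_inner_le_norm B a]
      have h3 : 0 ≤ C / s a := div_nonneg hC (le_of_lt (sqrt_pos a))
      nlinarith
    have hε : 0 < A - ‖B‖ := by linarith [norm_nonneg B]
    have htends : Tendsto (fun a : E3 => (A - ‖B‖) * ‖a‖) (cocompact E3) atTop :=
      (tendsto_norm_cocompact_atTop).const_mul_atTop hε
    exact tendsto_atTop_mono hbound htends
  · -- existence + uniqueness of minimizer
    have hcont : Continuous (fun a : E3 => A * s a + ⟪B, a⟫ + C / s a) := by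
      have hscont : Continuous s := by
        apply Real.continuous_sqrt.comp
        continuity
      have hsne : ∀ a : E3, s a ≠ 0 := fun a => ne_of_gt (sqrt_pos a)
      refine ((continuous_const.mul hscont).add ?_).add
        (continuous_const.div hscont hsne)
      exact continuous_const.inner continuous_id
    have hbound : ∀ a : E3, (A - ‖B‖) * ‖a‖ ≤
        A * s a + ⟪B, a⟫ + C / s a := by
      intro a
      have h1 : A * ‖a‖ ≤ A * s a :=
        mul_le_mul_of_nonneg_left (norm_le_sqrt a) (by linarith [norm_nonneg B])
      have h3 : 0 ≤ C / s a := div_nonneg hC (le_of_lt (sqrt_pos a))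
      nlinarith [abs_real_inner_le_norm B a, neg_abs_le (⟪B, a⟫)]
    have hε : 0 < A - ‖B‖ := by linarith [norm_nonneg B]
    have htends : Tendsto (fun a : E3 => A * s a + ⟪B, a⟫ + C / s a)
        (cocompact E3) atTop :=
      tendsto_atTop_mono hbound ((tendsto_norm_cocompact_atTop).const_mul_atTop hε)
    obtain ⟨a₀, ha₀⟩ := hcont.exists_forall_le htends
    refine ⟨a₀, ha₀, fun y hy => ?_⟩
    exact hstrict.eq_of_isMinOn (fun z _ => hy z) (fun z _ => ha₀ z)
      (Set.mem_univ y) (Set.mem_univ a₀)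

end
end

section
/- Let A, C ∈ ℝ with A > C ≥ 0, and define g : ℝ³ → ℝ by g(a) = A√(1+|a|²) + C/√(1+|a|²). Then for every a ∈ ℝ³ and every index i, the second partial derivative satisfies ∂²g/∂(a^i)² ≥ (A − C)·(1/a⁰)·(1 − (a^i)²/(a⁰)²) > 0, where a⁰ = √(1+|a|²). -/
noncomputable section

set_option maxHeartbeats 1600000 in
theorem stmt16 (A C : ℝ) (hAC : C < A) (hC : 0 ≤ C)
    (g : (Fin 3 → ℝ) → ℝ)
    (hg : g = fun a => A * Real.sqrt (1 + ∑ j : Fin 3, (a j)^2) +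
      C / Real.sqrt (1 + ∑ j : Fin 3, (a j)^2))
    (a : Fin 3 → ℝ) (i : Fin 3) (a0 : ℝ)
    (ha0 : a0 = Real.sqrt (1 + ∑ j : Fin 3, (a j)^2)) :
    iteratedDeriv 2 (fun t => g (Function.update a i t)) (a i) ≥
      (A - C) * (1 / a0) * (1 - (a i)^2 / a0^2) ∧
    0 < (A - C) * (1 / a0) * (1 - (a i)^2 / a0^2) := by
  set S := ∑ j ∈ Finset.univ \ {i}, (a j)^2 with hS
  have hS0 : 0 ≤ S := Finset.sum_nonneg fun j _ => sq_nonneg _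
  set c := 1 + S with hc
  have hc1 : (1:ℝ) ≤ c := by linarith
  have hc0 : (0:ℝ) < c := by linarith
  have hsum : ∀ t : ℝ, 1 + ∑ j : Fin 3, (Function.update a i t j)^2 = c + t^2 := by
    intro t
    have h1 : ∑ j : Fin 3, (Function.update a i t j)^2
        = ∑ j : Fin 3, Function.update (fun j => (a j)^2) i (t^2) j :=
      Finset.sum_congr rfl fun j _ => Function.apply_update (fun _ x => x^2) a i t j
    rw [h1, Finset.sum_update_of_mem (Finset.mem_univ i), hc, ← hS]
    ring
  have htpos : ∀ t : ℝ, 0 < Real.sqrt (c + t^2) := fun t => Real.sqrt_pos.2 (by positivity)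
  have hsq : ∀ t : ℝ, (Real.sqrt (c + t^2))^2 = c + t^2 := fun t =>
    Real.sq_sqrt (by positivity)
  have ha0' : a0 = Real.sqrt (c + (a i)^2) := by
    rw [ha0]
    congr 1
    have := hsum (a i)
    rw [Function.update_eq_self] at this
    linarith
  have ha0pos : 0 < a0 := ha0' ▸ htpos (a i)
  have hderiv_h : ∀ t : ℝ, HasDerivAt (fun t => Real.sqrt (c + t^2))
      (t / Real.sqrt (c + t^2)) t := by
    intro t
    have h1 : HasDerivAt (fun t : ℝ => c + t^2) (2*t) t := by
      simpa using (hasDerivAt_pow 2 t).const_add c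
    have h2 := (Real.hasDerivAt_sqrt (x := c + t^2) (by positivity)).comp t h1
    refine h2.congr_deriv ?_
    have := htpos t
    field_simp
  have heq : (fun t => g (Function.update a i t)) =
      fun t => A * Real.sqrt (c + t^2) + C / Real.sqrt (c + t^2) := by
    funext t
    rw [hg]
    simp only []
    rw [hsum t]
  have hf1 : ∀ t : ℝ, HasDerivAt (fun t => g (Function.update a i t))
      (A * t / Real.sqrt (c+t^2) - C * t / Real.sqrt (c+t^2)^3) t := by
    intro t
    rw [heq]
    have h1 := (hderiv_h t).const_mul A
    have h2 := (hasDerivAt_const t C).div (hderiv_h t) (ne_of_gt (htpos t))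
    have h3 := h1.add h2
    have hv := htpos t
    refine h3.congr_deriv ?_
    generalize Real.sqrt (c + t^2) = v at hv ⊢
    field_simp
    ring
  have hderiv1 : deriv (fun t => g (Function.update a i t)) =
      fun t => A * t / Real.sqrt (c+t^2) - C * t / Real.sqrt (c+t^2)^3 := by
    funext t; exact (hf1 t).deriv
  set t := a i with ht
  set u := Real.sqrt (c + t^2) with hu
  have huu : u = a0 := ha0'.symm
  have hupos : 0 < u := htpos t
  have husq : u^2 = c + t^2 := hsq t
  have hu1 : 1 ≤ u^2 := by nlinarith [sq_nonneg t]
  have hf2 : HasDerivAt (fun t => A * t / Real.sqrt (c+t^2) - C * t / Real.sqrt (c+t^2)^3)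
      ((A * u - A * t * (t / u)) / u^2 - (C * u^3 - C * t * (3 * u^2 * (t / u))) / (u^3)^2) t := by
    have h1 : HasDerivAt (fun s : ℝ => A * s) A t := by
      simpa using (hasDerivAt_id t).const_mul A
    have h2 : HasDerivAt (fun s : ℝ => C * s) C t := by
      simpa using (hasDerivAt_id t).const_mul C
    have h3 : HasDerivAt (fun s => Real.sqrt (c + s^2)^3) (3 * u^2 * (t / u)) t := by
      simpa [← hu] using (hderiv_h t).fun_pow 3
    exact (h1.div (hderiv_h t) (ne_of_gt hupos)).sub (h2.div h3 (by positivity))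
  have hiter : iteratedDeriv 2 (fun t => g (Function.update a i t)) t =
      (A * u - A * t * (t / u)) / u^2 - (C * u^3 - C * t * (3 * u^2 * (t / u))) / (u^3)^2 := by
    rw [iteratedDeriv_succ, iteratedDeriv_one, hderiv1]
    exact hf2.deriv
  rw [hiter, ← huu]
  constructor
  · rw [ge_iff_le, ← sub_nonneg]
    have key : (A * u - A * t * (t / u)) / u^2
          - (C * u^3 - C * t * (3 * u^2 * (t / u))) / (u^3)^2
          - (A - C) * (1 / u) * (1 - t^2 / u^2)
        = C * ((u^2 - t^2) * (u^2 - 1) + 2 * t^2) / u^5 := by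
      field_simp
      ring
    rw [key]
    apply div_nonneg _ (by positivity)
    have h1 : 0 < u^2 - t^2 := by nlinarith
    have h2 : (0:ℝ) ≤ u^2 - 1 := by linarith
    have h3 : 0 ≤ (u^2 - t^2) * (u^2 - 1) := mul_nonneg h1.le h2
    have h4 : 0 ≤ (u^2 - t^2) * (u^2 - 1) + 2 * t^2 := by nlinarith [sq_nonneg t]
    exact mul_nonneg hC h4
  · have h2 : 0 < 1 - t^2 / u^2 := by
      have h3 : t^2 / u^2 < 1 := by
        rw [div_lt_one (by positivity)]
        nlinarith
      linarith
    exact mul_pos (mul_pos (by linarith) (by positivity)) h2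
end
end
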